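/- Let Φ = {S_i(x,y) = (α_i x + t_{i,1}, β_i y + t_{i,2})}_{i=1}^m be a contracting diagonal affine IFS on the plane with S_i([0,1]²) ⊂ [0,1]², and let t_Φ be the unique root of the subadditive pressure function t ↦ P_Φ(t). Then for every ε > 0 there exists K = K(ε) such that for every k > K there is a homogeneous affine IFS Ψ_k ⊆ Φ^k (a subfamily of the k-th iterate in which all maps share the same linear part) such that |t_Φ − t_{Ψ_k}| < ε, where t_{Ψ_k} is the root of the subadditive pressure function of Ψ_k. -/

import Mathlib

open MeasureTheory Set Filter Metric
open scoped ENNReal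

noncomputable section

/-- The contraction ratio (derivative) of the composition
`f_{w 1} ∘ ⋯ ∘ f_{w n}` of the similarities `f_i x = r i * x + t i`. -/
def wordRatio {ι : Type*} (r : ι → ℝ) {n : ℕ} (w : Fin n → ι) : ℝ :=
  ∏ k, r (w k)

/-- The value at `0` of the composition `f_{w 1} ∘ ⋯ ∘ f_{w n}` of the
similarities `f_i x = r i * x + t i`. -/
def wordFix {ι : Type*} (r t : ι → ℝ) {n : ℕ} (w : Fin n → ι) : ℝ :=
  ∑ k, (∏ l ∈ Finset.Iio k, r (w l)) * t (w k)

/-- The Hochman condition for the IFS of similarities `{x ↦ r i * x + t i}` on `ℝ`: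
there is `ε > 0` such that for every `n > 0` and distinct words `w₁ ≠ w₂` of length `n`,
either the derivatives of the compositions differ (`Δ = ∞`), or the values at `0`
are at distance `> ε ^ n`. -/
def HochmanCondition {ι : Type*} [Fintype ι] (r t : ι → ℝ) : Prop :=
  ∃ ε > (0 : ℝ), ∀ n : ℕ, 0 < n → ∀ w₁ w₂ : Fin n → ι, w₁ ≠ w₂ →
    wordRatio r w₁ = wordRatio r w₂ →
    ε ^ n < |wordFix r t w₁ - wordFix r t w₂|

/-- The subadditive pressure function of a diagonal planar affine IFS with linear
parts `diag (a i, b i)`. -/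
def pressureFn {ι : Type*} [Fintype ι] (a b : ι → ℝ) (s : ℝ) : ℝ :=
  if s < 1 then max (∑ i, |a i| ^ s) (∑ i, |b i| ^ s)
  else if s < 2 then max (∑ i, |a i| * |b i| ^ (s - 1)) (∑ i, |b i| * |a i| ^ (s - 1))
  else ∑ i, (|a i| * |b i|) ^ (s / 2)

/-! ### Auxiliary definitions and lemmas -/

/-- The single-map (homogeneous) pressure kernel with contraction ratios `a`, `b`. -/
def psi (a b t : ℝ) : ℝ :=
  if t < 1 then max (a ^ t) (b ^ t)
  else if t < 2 then max (a * b ^ (t - 1)) (b * a ^ (t - 1))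
  else (a * b) ^ (t / 2)

lemma continuous_const_rpow_exp {a : ℝ} (ha : 0 < a) : Continuous fun t : ℝ => a ^ t := by
  have : (fun t : ℝ => a ^ t) = fun t => Real.exp (Real.log a * t) := by
    funext t; rw [Real.rpow_def_of_pos ha]
  rw [this]
  exact Real.continuous_exp.comp (continuous_const.mul continuous_id)

lemma psi_continuous {a b : ℝ} (ha : 0 < a) (hb : 0 < b) : Continuous (psi a b) := by
  have hf : Continuous fun t : ℝ => max (a ^ t) (b ^ t) :=
    (continuous_const_rpow_exp ha).max (continuous_const_rpow_exp hb)
  have hsub : Continuous fun t : ℝ => t - 1 := continuous_id.sub continuous_const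
  have hg : Continuous fun t : ℝ => max (a * b ^ (t - 1)) (b * a ^ (t - 1)) :=
    (continuous_const.mul ((continuous_const_rpow_exp hb).comp hsub)).max
      (continuous_const.mul ((continuous_const_rpow_exp ha).comp hsub))
  have hh : Continuous fun t : ℝ => (a * b) ^ (t / 2) :=
    (continuous_const_rpow_exp (mul_pos ha hb)).comp (continuous_id.div_const 2)
  have hgh : Continuous fun t : ℝ =>
      if (2 : ℝ) ≤ t then (a * b) ^ (t / 2)
      else max (a * b ^ (t - 1)) (b * a ^ (t - 1)) := by
    apply Continuous.if_le hh hg continuous_const continuous_id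
    intro x hx
    have hx' : x = 2 := by simpa using hx.symm
    subst hx'
    rw [show (2:ℝ)/2 = 1 by norm_num, show (2:ℝ)-1 = 1 by norm_num, Real.rpow_one,
      Real.rpow_one, Real.rpow_one, mul_comm b a, max_self]
  have heq : psi a b = fun t : ℝ =>
      if (1 : ℝ) ≤ t then
        (if (2 : ℝ) ≤ t then (a * b) ^ (t / 2)
         else max (a * b ^ (t - 1)) (b * a ^ (t - 1)))
      else max (a ^ t) (b ^ t) := by
    funext t
    unfold psi
    rcases lt_or_ge t 1 with h1 | h1
    · rw [if_pos h1, if_neg (not_le.mpr h1)]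
    · rw [if_neg (not_lt.mpr h1), if_pos h1]
      rcases lt_or_ge t 2 with h2 | h2
      · rw [if_pos h2, if_neg (not_le.mpr h2)]
      · rw [if_neg (not_lt.mpr h2), if_pos h2]
  rw [heq]
  apply Continuous.if_le hgh hf continuous_const continuous_id
  intro x hx
  have hx' : x = 1 := by simpa using hx.symm
  subst hx'
  rw [if_neg (by norm_num : ¬ (2:ℝ) ≤ 1)]
  rw [show (1:ℝ)-1 = 0 by norm_num, Real.rpow_zero, Real.rpow_zero, Real.rpow_one,
    Real.rpow_one, mul_one, mul_one]

lemma psi_nonneg {a b : ℝ} (ha : 0 ≤ a) (hb : 0 ≤ b) (t : ℝ) : 0 ≤ psi a b t := by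
  unfold psi
  split_ifs <;> positivity

lemma psi_decay {a b r s t : ℝ} (ha : 0 < a) (hb : 0 < b)
    (har : a ≤ r) (hbr : b ≤ r) (hst : s ≤ t) :
    psi a b t ≤ psi a b s * r ^ (t - s) := by
  have hr : 0 < r := lt_of_lt_of_le ha har
  have master : ∀ x : ℝ, 0 < x → x ≤ r → ∀ y : ℝ, 0 < y → y ≤ r →
      ∀ g₁ g₂ e₁ e₂ : ℝ, g₁ ≤ e₁ → g₂ ≤ e₂ → e₁ + e₂ - g₁ - g₂ = t - s →
      x ^ e₁ * y ^ e₂ ≤ x ^ g₁ * y ^ g₂ * r ^ (t - s) := by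
    intro x hx hxr y hy hyr g₁ g₂ e₁ e₂ h₁ h₂ hsum
    have hd1 : x ^ e₁ = x ^ g₁ * x ^ (e₁ - g₁) := by
      rw [← Real.rpow_add hx]; congr 1; ring
    have hd2 : y ^ e₂ = y ^ g₂ * y ^ (e₂ - g₂) := by
      rw [← Real.rpow_add hy]; congr 1; ring
    have hr1 : x ^ (e₁ - g₁) ≤ r ^ (e₁ - g₁) :=
      Real.rpow_le_rpow hx.le hxr (by linarith)
    have hr2 : y ^ (e₂ - g₂) ≤ r ^ (e₂ - g₂) :=
      Real.rpow_le_rpow hy.le hyr (by linarith)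
    have hrs : r ^ (e₁ - g₁) * r ^ (e₂ - g₂) = r ^ (t - s) := by
      rw [← Real.rpow_add hr]; congr 1; linarith
    calc x ^ e₁ * y ^ e₂
        = x ^ g₁ * y ^ g₂ * (x ^ (e₁ - g₁) * y ^ (e₂ - g₂)) := by rw [hd1, hd2]; ring
      _ ≤ x ^ g₁ * y ^ g₂ * (r ^ (e₁ - g₁) * r ^ (e₂ - g₂)) := by
          apply mul_le_mul_of_nonneg_left
          · exact mul_le_mul hr1 hr2 (Real.rpow_nonneg hy.le _) (Real.rpow_nonneg hr.le _)
          · exact mul_nonneg (Real.rpow_nonneg hx.le _) (Real.rpow_nonneg hy.le _)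
      _ = x ^ g₁ * y ^ g₂ * r ^ (t - s) := by rw [hrs]
  have hrpos : 0 ≤ r ^ (t - s) := Real.rpow_nonneg hr.le _
  unfold psi
  rcases lt_or_ge t 1 with ht1 | ht1
  · have hs1 : s < 1 := lt_of_le_of_lt hst ht1
    rw [if_pos ht1, if_pos hs1]
    apply max_le
    · calc a ^ t = a ^ t * b ^ (0:ℝ) := by rw [Real.rpow_zero, mul_one]
        _ ≤ a ^ s * b ^ (0:ℝ) * r ^ (t - s) :=
            master a ha har b hb hbr s 0 t 0 hst le_rfl (by ring)
        _ = a ^ s * r ^ (t - s) := by rw [Real.rpow_zero, mul_one]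
        _ ≤ max (a ^ s) (b ^ s) * r ^ (t - s) :=
            mul_le_mul_of_nonneg_right (le_max_left _ _) hrpos
    · calc b ^ t = b ^ t * a ^ (0:ℝ) := by rw [Real.rpow_zero, mul_one]
        _ ≤ b ^ s * a ^ (0:ℝ) * r ^ (t - s) :=
            master b hb hbr a ha har s 0 t 0 hst le_rfl (by ring)
        _ = b ^ s * r ^ (t - s) := by rw [Real.rpow_zero, mul_one]
        _ ≤ max (a ^ s) (b ^ s) * r ^ (t - s) :=
            mul_le_mul_of_nonneg_right (le_max_right _ _) hrpos
  · rcases lt_or_ge t 2 with ht2 | ht2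
    · rw [if_neg (not_lt.mpr ht1), if_pos ht2]
      rcases lt_or_ge s 1 with hs1 | hs1
      · rw [if_pos hs1]
        apply max_le
        · calc a * b ^ (t - 1) = a ^ (1:ℝ) * b ^ (t - 1) := by rw [Real.rpow_one]
            _ ≤ a ^ s * b ^ (0:ℝ) * r ^ (t - s) :=
                master a ha har b hb hbr s 0 1 (t - 1) hs1.le (by linarith) (by ring)
            _ = a ^ s * r ^ (t - s) := by rw [Real.rpow_zero, mul_one]
            _ ≤ max (a ^ s) (b ^ s) * r ^ (t - s) :=
                mul_le_mul_of_nonneg_right (le_max_left _ _) hrpos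
        · calc b * a ^ (t - 1) = b ^ (1:ℝ) * a ^ (t - 1) := by rw [Real.rpow_one]
            _ ≤ b ^ s * a ^ (0:ℝ) * r ^ (t - s) :=
                master b hb hbr a ha har s 0 1 (t - 1) hs1.le (by linarith) (by ring)
            _ = b ^ s * r ^ (t - s) := by rw [Real.rpow_zero, mul_one]
            _ ≤ max (a ^ s) (b ^ s) * r ^ (t - s) :=
                mul_le_mul_of_nonneg_right (le_max_right _ _) hrpos
      · have hs2 : s < 2 := lt_of_le_of_lt hst ht2
        rw [if_neg (not_lt.mpr hs1), if_pos hs2]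
        apply max_le
        · calc a * b ^ (t - 1) = a ^ (1:ℝ) * b ^ (t - 1) := by rw [Real.rpow_one]
            _ ≤ a ^ (1:ℝ) * b ^ (s - 1) * r ^ (t - s) :=
                master a ha har b hb hbr 1 (s - 1) 1 (t - 1) le_rfl (by linarith) (by ring)
            _ = a * b ^ (s - 1) * r ^ (t - s) := by rw [Real.rpow_one]
            _ ≤ max (a * b ^ (s - 1)) (b * a ^ (s - 1)) * r ^ (t - s) :=
                mul_le_mul_of_nonneg_right (le_max_left _ _) hrpos
        · calc b * a ^ (t - 1) = b ^ (1:ℝ) * a ^ (t - 1) := by rw [Real.rpow_one]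
            _ ≤ b ^ (1:ℝ) * a ^ (s - 1) * r ^ (t - s) :=
                master b hb hbr a ha har 1 (s - 1) 1 (t - 1) le_rfl (by linarith) (by ring)
            _ = b * a ^ (s - 1) * r ^ (t - s) := by rw [Real.rpow_one]
            _ ≤ max (a * b ^ (s - 1)) (b * a ^ (s - 1)) * r ^ (t - s) :=
                mul_le_mul_of_nonneg_right (le_max_right _ _) hrpos
    · rw [if_neg (not_lt.mpr (by linarith : (1:ℝ) ≤ t)), if_neg (not_lt.mpr ht2)]
      have hab : (a * b) ^ (t / 2) = a ^ (t / 2) * b ^ (t / 2) :=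
        Real.mul_rpow ha.le hb.le
      rcases lt_or_ge s 1 with hs1 | hs1
      · rw [if_pos hs1]
        calc (a * b) ^ (t / 2) = a ^ (t / 2) * b ^ (t / 2) := hab
          _ ≤ a ^ s * b ^ (0:ℝ) * r ^ (t - s) :=
              master a ha har b hb hbr s 0 (t / 2) (t / 2) (by linarith) (by linarith) (by ring)
          _ = a ^ s * r ^ (t - s) := by rw [Real.rpow_zero, mul_one]
          _ ≤ max (a ^ s) (b ^ s) * r ^ (t - s) :=
              mul_le_mul_of_nonneg_right (le_max_left _ _) hrpos
      · rcases lt_or_ge s 2 with hs2 | hs2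
        · rw [if_neg (not_lt.mpr hs1), if_pos hs2]
          calc (a * b) ^ (t / 2) = a ^ (t / 2) * b ^ (t / 2) := hab
            _ ≤ a ^ (1:ℝ) * b ^ (s - 1) * r ^ (t - s) :=
                master a ha har b hb hbr 1 (s - 1) (t / 2) (t / 2)
                  (by linarith) (by linarith) (by ring)
            _ = a * b ^ (s - 1) * r ^ (t - s) := by rw [Real.rpow_one]
            _ ≤ max (a * b ^ (s - 1)) (b * a ^ (s - 1)) * r ^ (t - s) :=
                mul_le_mul_of_nonneg_right (le_max_left _ _) hrpos
        · rw [if_neg (not_lt.mpr hs1), if_neg (not_lt.mpr hs2)]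
          calc (a * b) ^ (t / 2) = a ^ (t / 2) * b ^ (t / 2) := hab
            _ ≤ a ^ (s / 2) * b ^ (s / 2) * r ^ (t - s) :=
                master a ha har b hb hbr (s / 2) (s / 2) (t / 2) (t / 2)
                  (by linarith) (by linarith) (by ring)
            _ = (a * b) ^ (s / 2) * r ^ (t - s) := by
                rw [Real.mul_rpow ha.le hb.le]

lemma words_sum {m k : ℕ} (f : Fin m → ℝ) :
    ∑ w : Fin k → Fin m, ∏ l, f (w l) = (∑ i, f i) ^ k := by
  classical
  have h := Finset.prod_univ_sum (fun _ : Fin k => (Finset.univ : Finset (Fin m)))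
    (fun _ i => f i)
  rw [Fintype.piFinset_univ] at h
  rw [← h, Finset.prod_const, Finset.card_univ, Fintype.card_fin]

lemma word_abs {m k : ℕ} (γ : Fin m → ℝ) (w : Fin k → Fin m) :
    |wordRatio γ w| = ∏ l, |γ (w l)| := by
  unfold wordRatio; exact Finset.abs_prod _ _

lemma word_rpow {m k : ℕ} (γ : Fin m → ℝ) (w : Fin k → Fin m) (t : ℝ) :
    |wordRatio γ w| ^ t = ∏ l, |γ (w l)| ^ t := by
  rw [word_abs, ← Real.finset_prod_rpow _ _ (fun i _ => abs_nonneg _) t]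

lemma word_mul_rpow {m k : ℕ} (α β : Fin m → ℝ) (w : Fin k → Fin m) (u : ℝ) :
    |wordRatio α w| * |wordRatio β w| ^ u = ∏ l, (|α (w l)| * |β (w l)| ^ u) := by
  rw [Finset.prod_mul_distrib, ← word_abs, ← word_rpow]

lemma word_mul_all_rpow {m k : ℕ} (α β : Fin m → ℝ) (w : Fin k → Fin m) (u : ℝ) :
    (|wordRatio α w| * |wordRatio β w|) ^ u = ∏ l, (|α (w l)| * |β (w l)|) ^ u := by
  rw [Real.finset_prod_rpow _ _ (fun i _ => mul_nonneg (abs_nonneg _) (abs_nonneg _)) u,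
    Finset.prod_mul_distrib, ← word_abs, ← word_abs]

lemma wordRatio_eq_prod_pow {m k : ℕ} (γ : Fin m → ℝ) (w : Fin k → Fin m) :
    wordRatio γ w = ∏ i, γ i ^ (Finset.univ.filter fun l => w l = i).card := by
  classical
  unfold wordRatio
  rw [Finset.prod_comp γ w]
  apply Finset.prod_subset (Finset.subset_univ _)
  intro i _ hi
  have h0 : (Finset.univ.filter fun l => w l = i).card = 0 := by
    rw [Finset.card_eq_zero, Finset.filter_eq_empty_iff]
    intro l _
    exact fun h => hi (Finset.mem_image.mpr ⟨l, Finset.mem_univ l, h⟩)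
  rw [h0, pow_zero]

lemma card_pairs {m k : ℕ} (α β : Fin m → ℝ) :
    (Finset.univ.image fun w : Fin k → Fin m =>
      (wordRatio α w, wordRatio β w)).card ≤ (k + 1) ^ m := by
  classical
  set cnt : (Fin k → Fin m) → (Fin m → ℕ) :=
    fun w i => (Finset.univ.filter fun l => w l = i).card with hcnt
  have himg : (Finset.univ.image fun w : Fin k → Fin m =>
      (wordRatio α w, wordRatio β w)) =
      (Finset.univ.image cnt).image
        (fun n : Fin m → ℕ => (∏ i, α i ^ n i, ∏ i, β i ^ n i)) := by
    rw [Finset.image_image]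
    apply Finset.image_congr
    intro w _
    simp only [Function.comp, hcnt]
    exact Prod.ext (wordRatio_eq_prod_pow α w) (wordRatio_eq_prod_pow β w)
  rw [himg]
  refine le_trans Finset.card_image_le ?_
  have hsub : Finset.univ.image cnt ⊆ Fintype.piFinset fun _ : Fin m => Finset.range (k + 1) := by
    intro n hn
    rcases Finset.mem_image.mp hn with ⟨w, _, rfl⟩
    rw [Fintype.mem_piFinset]
    intro i
    rw [Finset.mem_range]
    refine Nat.lt_succ_of_le (le_trans (Finset.card_filter_le _ _) ?_)
    rw [Finset.card_univ, Fintype.card_fin]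
  calc (Finset.univ.image cnt).card
      ≤ (Fintype.piFinset fun _ : Fin m => Finset.range (k + 1)).card :=
        Finset.card_le_card hsub
    _ = (k + 1) ^ m := by
        rw [Fintype.card_piFinset]
        simp [Finset.card_range]

theorem pressure_root_approximation
    (m : ℕ) (α β t1 t2 : Fin m → ℝ)
    (hα : ∀ i, α i ≠ 0 ∧ |α i| < 1) (hβ : ∀ i, β i ≠ 0 ∧ |β i| < 1)
    (S : Fin m → ℝ × ℝ → ℝ × ℝ)
    (hSdef : ∀ i q, S i q = (α i * q.1 + t1 i, β i * q.2 + t2 i))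
    (hcube : ∀ i, S i '' Set.Icc ((0, 0) : ℝ × ℝ) (1, 1) ⊆ Set.Icc ((0, 0) : ℝ × ℝ) (1, 1))
    (tΦ : ℝ) (htΦ : pressureFn α β tΦ = 1) :
    ∀ ε > (0 : ℝ), ∃ K : ℕ, ∀ k : ℕ, K < k →
      ∃ W : Finset (Fin k → Fin m), W.Nonempty ∧
        -- `Ψ_k = {S_{w 1} ∘ ⋯ ∘ S_{w k} : w ∈ W}` is homogeneous:
        (∀ w₁ ∈ W, ∀ w₂ ∈ W,
          wordRatio α w₁ = wordRatio α w₂ ∧ wordRatio β w₁ = wordRatio β w₂) ∧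
        -- the root of the subadditive pressure of `Ψ_k` is `ε`-close to `t_Φ`:
        ∃ tΨ : ℝ,
          pressureFn (fun w : W => wordRatio α (w : Fin k → Fin m))
            (fun w : W => wordRatio β (w : Fin k → Fin m)) tΨ = 1 ∧
          |tΦ - tΨ| < ε := by
  classical
  intro ε hε
  -- m is positive
  have hm : 0 < m := by
    by_contra hm
    push_neg at hm
    have hm0 : m = 0 := Nat.le_zero.mp hm
    subst hm0
    unfold pressureFn at htΦ
    split_ifs at htΦ <;> simp at htΦ
  have hm' : Nonempty (Fin m) := ⟨⟨0, hm⟩⟩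
  obtain ⟨i0⟩ := hm'
  haveI : Nonempty (Fin m) := ⟨i0⟩
  -- the maximal contraction ratio ρ
  set ρ : ℝ := Finset.univ.sup' Finset.univ_nonempty (fun i : Fin m => max |α i| |β i|)
    with hρdef
  have hρa : ∀ i, |α i| ≤ ρ := by
    intro i
    rw [hρdef]
    exact le_trans (le_max_left _ _)
      (Finset.le_sup' (fun i : Fin m => max |α i| |β i|) (Finset.mem_univ i))
  have hρb : ∀ i, |β i| ≤ ρ := by
    intro i
    rw [hρdef]
    exact le_trans (le_max_right _ _)
      (Finset.le_sup' (fun i : Fin m => max |α i| |β i|) (Finset.mem_univ i))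
  have hρpos : 0 < ρ := lt_of_lt_of_le (abs_pos.mpr (hα i0).1) (hρa i0)
  have hρ1 : ρ < 1 := by
    rw [hρdef, Finset.sup'_lt_iff]
    intro i _
    exact max_lt (hα i).2 (hβ i).2
  set δ : ℝ := ε / 2 with hδdef
  have hδpos : 0 < δ := by rw [hδdef]; linarith
  set c : ℝ := ρ ^ δ with hcdef
  have hcpos : 0 < c := Real.rpow_pos_of_pos hρpos δ
  have hc1 : c < 1 := Real.rpow_lt_one hρpos.le hρ1 hδpos
  -- choose K
  obtain ⟨K, hK⟩ : ∃ K : ℕ, ∀ k : ℕ, K ≤ k → ((k : ℝ) + 1) ^ m * c ^ k ≤ 1 := by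
    have h0 : Tendsto (fun n : ℕ => (n : ℝ) ^ m * c ^ n) atTop (nhds 0) :=
      (summable_pow_mul_geometric_of_norm_lt_one (R := ℝ) m
        (by rwa [Real.norm_eq_abs, abs_of_pos hcpos])).tendsto_atTop_zero
    have h1 : Tendsto (fun n : ℕ => ((n : ℝ) + 1) ^ m * c ^ n) atTop (nhds 0) := by
      have h2 := (h0.comp (tendsto_add_atTop_nat 1)).mul_const (c⁻¹)
      rw [zero_mul] at h2
      have heq : (fun n : ℕ => ((n : ℝ) + 1) ^ m * c ^ n) =
          fun n : ℕ => ((fun n : ℕ => (n : ℝ) ^ m * c ^ n) ∘ (fun n => n + 1)) n * c⁻¹ := by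
        funext n
        simp only [Function.comp]
        push_cast
        rw [pow_succ]
        field_simp
      rw [heq]
      exact h2
    have h3 := h1.eventually (eventually_le_nhds zero_lt_one)
    exact Filter.eventually_atTop.mp h3
  refine ⟨K, fun k hk => ?_⟩
  -- per-word quantities
  have hA0 : ∀ w : Fin k → Fin m, wordRatio α w ≠ 0 := fun w =>
    Finset.prod_ne_zero_iff.mpr fun l _ => (hα (w l)).1
  have hB0 : ∀ w : Fin k → Fin m, wordRatio β w ≠ 0 := fun w =>
    Finset.prod_ne_zero_iff.mpr fun l _ => (hβ (w l)).1
  have hAle : ∀ w : Fin k → Fin m, |wordRatio α w| ≤ ρ ^ k := by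
    intro w
    rw [word_abs]
    calc ∏ l, |α (w l)| ≤ ∏ _l : Fin k, ρ :=
        Finset.prod_le_prod (fun l _ => abs_nonneg _) (fun l _ => hρa _)
      _ = ρ ^ k := by rw [Finset.prod_const, Finset.card_univ, Fintype.card_fin]
  have hBle : ∀ w : Fin k → Fin m, |wordRatio β w| ≤ ρ ^ k := by
    intro w
    rw [word_abs]
    calc ∏ l, |β (w l)| ≤ ∏ _l : Fin k, ρ :=
        Finset.prod_le_prod (fun l _ => abs_nonneg _) (fun l _ => hρb _)
      _ = ρ ^ k := by rw [Finset.prod_const, Finset.card_univ, Fintype.card_fin]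
  -- the letter weight φ coming from the winning branch of the pressure at tΦ
  obtain ⟨φ, hφ0, hφsum, hφle⟩ :
      ∃ φ : Fin m → ℝ, (∀ i, 0 ≤ φ i) ∧ (∑ i, φ i) = 1 ∧
        ∀ w : Fin k → Fin m,
          ∏ l, φ (w l) ≤ psi |wordRatio α w| |wordRatio β w| tΦ := by
    have h := htΦ
    unfold pressureFn at h
    by_cases h1 : tΦ < 1
    · rw [if_pos h1] at h
      rcases max_choice (∑ i, |α i| ^ tΦ) (∑ i, |β i| ^ tΦ) with hc' | hc' <;>
        rw [hc'] at h
      · refine ⟨fun i => |α i| ^ tΦ, fun i => Real.rpow_nonneg (abs_nonneg _) _, h, ?_⟩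
        intro w
        rw [← word_rpow]
        unfold psi
        rw [if_pos h1]
        exact le_max_left _ _
      · refine ⟨fun i => |β i| ^ tΦ, fun i => Real.rpow_nonneg (abs_nonneg _) _, h, ?_⟩
        intro w
        rw [← word_rpow]
        unfold psi
        rw [if_pos h1]
        exact le_max_right _ _
    · rw [if_neg h1] at h
      by_cases h2 : tΦ < 2
      · rw [if_pos h2] at h
        rcases max_choice (∑ i, |α i| * |β i| ^ (tΦ - 1))
            (∑ i, |β i| * |α i| ^ (tΦ - 1)) with hc' | hc' <;> rw [hc'] at h
        · refine ⟨fun i => |α i| * |β i| ^ (tΦ - 1),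
            fun i => mul_nonneg (abs_nonneg _) (Real.rpow_nonneg (abs_nonneg _) _), h, ?_⟩
          intro w
          rw [← word_mul_rpow]
          unfold psi
          rw [if_neg h1, if_pos h2]
          exact le_max_left _ _
        · refine ⟨fun i => |β i| * |α i| ^ (tΦ - 1),
            fun i => mul_nonneg (abs_nonneg _) (Real.rpow_nonneg (abs_nonneg _) _), h, ?_⟩
          intro w
          rw [← word_mul_rpow]
          unfold psi
          rw [if_neg h1, if_pos h2]
          exact le_max_right _ _
      · rw [if_neg h2] at h
        refine ⟨fun i => (|α i| * |β i|) ^ (tΦ / 2),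
          fun i => Real.rpow_nonneg (mul_nonneg (abs_nonneg _) (abs_nonneg _)) _, h, ?_⟩
        intro w
        rw [← word_mul_all_rpow]
        unfold psi
        rw [if_neg h1, if_neg h2]
  -- the class decomposition
  set V : Finset (ℝ × ℝ) :=
    Finset.univ.image (fun w : Fin k → Fin m => (wordRatio α w, wordRatio β w)) with hVdef
  have hVne : V.Nonempty := by
    refine ⟨(wordRatio α (fun _ : Fin k => i0), wordRatio β (fun _ : Fin k => i0)), ?_⟩
    exact Finset.mem_image_of_mem _ (Finset.mem_univ _)
  have hVpos : (0 : ℝ) < V.card := by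
    exact_mod_cast Finset.card_pos.mpr hVne
  have hVcard : (V.card : ℝ) ≤ ((k : ℝ) + 1) ^ m := by
    have := card_pairs (k := k) α β
    calc (V.card : ℝ) ≤ (((k + 1) ^ m : ℕ) : ℝ) := by exact_mod_cast this
      _ = ((k : ℝ) + 1) ^ m := by push_cast; ring
  have htot : ∑ v ∈ V, ∑ w ∈ Finset.univ.filter
      (fun w : Fin k → Fin m => (wordRatio α w, wordRatio β w) = v),
      ∏ l, φ (w l) = 1 := by
    rw [Finset.sum_fiberwise_of_maps_to
      (fun w _ => Finset.mem_image_of_mem _ (Finset.mem_univ w)),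
      words_sum, hφsum, one_pow]
  obtain ⟨v, hvV, hv⟩ : ∃ v ∈ V, (1 : ℝ) / V.card ≤ ∑ w ∈ Finset.univ.filter
      (fun w : Fin k → Fin m => (wordRatio α w, wordRatio β w) = v), ∏ l, φ (w l) := by
    apply Finset.exists_le_of_sum_le hVne
    rw [htot, Finset.sum_const, nsmul_eq_mul, mul_one_div, div_self (ne_of_gt hVpos)]
  set W : Finset (Fin k → Fin m) :=
    Finset.univ.filter (fun w => (wordRatio α w, wordRatio β w) = v) with hWdef
  have hmemW : ∀ w ∈ W, (wordRatio α w, wordRatio β w) = v := by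
    intro w hw
    exact (Finset.mem_filter.mp hw).2
  have hv' : (1 : ℝ) / V.card ≤ ∑ w ∈ W, ∏ l, φ (w l) := hv
  have hWne : W.Nonempty := by
    by_contra hne
    rw [Finset.not_nonempty_iff_eq_empty] at hne
    rw [hne, Finset.sum_empty] at hv'
    have : (0 : ℝ) < 1 / V.card := by positivity
    linarith
  obtain ⟨w₀, hw₀⟩ := hWne
  set ahom : ℝ := |wordRatio α w₀| with hahomdef
  set bhom : ℝ := |wordRatio β w₀| with hbhomdef
  have hapos : 0 < ahom := abs_pos.mpr (hA0 w₀)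
  have hbpos : 0 < bhom := abs_pos.mpr (hB0 w₀)
  have haρ : ahom ≤ ρ ^ k := hAle w₀
  have hbρ : bhom ≤ ρ ^ k := hBle w₀
  have hvA : ∀ w ∈ W, |wordRatio α w| = ahom := by
    intro w hw
    have h := (hmemW w hw).trans (hmemW w₀ hw₀).symm
    have h1 : wordRatio α w = wordRatio α w₀ := congrArg Prod.fst h
    rw [hahomdef, h1]
  have hvB : ∀ w ∈ W, |wordRatio β w| = bhom := by
    intro w hw
    have h := (hmemW w hw).trans (hmemW w₀ hw₀).symm
    have h1 : wordRatio β w = wordRatio β w₀ := congrArg Prod.snd h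
    rw [hbhomdef, h1]
  -- constant sum helper
  have hcW : ∀ (f : (Fin k → Fin m) → ℝ) (C : ℝ), (∀ w ∈ W, f w = C) →
      ∑ w : ↥W, f ↑w = (W.card : ℝ) * C := by
    intro f C hf
    rw [Finset.sum_coe_sort W f, Finset.sum_congr rfl hf, Finset.sum_const, nsmul_eq_mul]
  -- the subsystem pressure is homogeneous
  have hQ : ∀ t : ℝ, pressureFn (fun w : W => wordRatio α (w : Fin k → Fin m))
      (fun w : W => wordRatio β (w : Fin k → Fin m)) t = (W.card : ℝ) * psi ahom bhom t := by
    intro t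
    simp only [pressureFn, psi]
    have eA : ∀ u : ℝ, ∑ w : ↥W, |wordRatio α (w : Fin k → Fin m)| ^ u
        = (W.card : ℝ) * ahom ^ u := fun u =>
      hcW (fun w => |wordRatio α w| ^ u) (ahom ^ u) (fun w hw => by simp only [hvA w hw])
    have eB : ∀ u : ℝ, ∑ w : ↥W, |wordRatio β (w : Fin k → Fin m)| ^ u
        = (W.card : ℝ) * bhom ^ u := fun u =>
      hcW (fun w => |wordRatio β w| ^ u) (bhom ^ u) (fun w hw => by simp only [hvB w hw])
    have eAB : ∑ w : ↥W, |wordRatio α (w : Fin k → Fin m)| *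
        |wordRatio β (w : Fin k → Fin m)| ^ (t - 1)
        = (W.card : ℝ) * (ahom * bhom ^ (t - 1)) :=
      hcW (fun w => |wordRatio α w| * |wordRatio β w| ^ (t - 1)) _
        (fun w hw => by simp only [hvA w hw, hvB w hw])
    have eBA : ∑ w : ↥W, |wordRatio β (w : Fin k → Fin m)| *
        |wordRatio α (w : Fin k → Fin m)| ^ (t - 1)
        = (W.card : ℝ) * (bhom * ahom ^ (t - 1)) :=
      hcW (fun w => |wordRatio β w| * |wordRatio α w| ^ (t - 1)) _
        (fun w hw => by simp only [hvA w hw, hvB w hw])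
    have eM : ∑ w : ↥W, (|wordRatio α (w : Fin k → Fin m)| *
        |wordRatio β (w : Fin k → Fin m)|) ^ (t / 2)
        = (W.card : ℝ) * ((ahom * bhom) ^ (t / 2)) :=
      hcW (fun w => (|wordRatio α w| * |wordRatio β w|) ^ (t / 2)) _
        (fun w hw => by simp only [hvA w hw, hvB w hw])
    split_ifs
    · rw [eA, eB, ← mul_max_of_nonneg _ _ (show (0:ℝ) ≤ (W.card:ℝ) from Nat.cast_nonneg _)]
    · rw [eAB, eBA, ← mul_max_of_nonneg _ _ (show (0:ℝ) ≤ (W.card:ℝ) from Nat.cast_nonneg _)]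
    · exact eM
  -- upper bound at tΦ
  have keyW : ∀ f : Fin m → ℝ, (∀ i, 0 ≤ f i) → (∑ i, f i) ≤ 1 → ∀ C : ℝ,
      (∀ w ∈ W, (∏ l, f (w l)) = C) → (W.card : ℝ) * C ≤ 1 := by
    intro f hf hsum C hC
    have h1 : (W.card : ℝ) * C = ∑ w ∈ W, ∏ l, f (w l) := by
      rw [Finset.sum_congr rfl hC, Finset.sum_const, nsmul_eq_mul]
    rw [h1]
    calc ∑ w ∈ W, ∏ l, f (w l) ≤ ∑ w : Fin k → Fin m, ∏ l, f (w l) :=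
        Finset.sum_le_sum_of_subset_of_nonneg (Finset.subset_univ _)
          (fun w _ _ => Finset.prod_nonneg fun l _ => hf _)
      _ = (∑ i, f i) ^ k := words_sum f
      _ ≤ 1 := pow_le_one₀ (Finset.sum_nonneg fun i _ => hf i) hsum
  have hupper : (W.card : ℝ) * psi ahom bhom tΦ ≤ 1 := by
    have h := htΦ
    unfold pressureFn at h
    unfold psi
    by_cases h1 : tΦ < 1
    · rw [if_pos h1] at h ⊢
      rw [mul_max_of_nonneg _ _ (show (0:ℝ) ≤ (W.card:ℝ) from Nat.cast_nonneg _)]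
      apply max_le
      · exact keyW (fun i => |α i| ^ tΦ)
          (fun i => Real.rpow_nonneg (abs_nonneg _) _)
          ((le_max_left _ _).trans h.le) _
          (fun w hw => by simp only [← word_rpow, hvA w hw])
      · exact keyW (fun i => |β i| ^ tΦ)
          (fun i => Real.rpow_nonneg (abs_nonneg _) _)
          ((le_max_right _ _).trans h.le) _
          (fun w hw => by simp only [← word_rpow, hvB w hw])
    · rw [if_neg h1] at h ⊢
      by_cases h2 : tΦ < 2
      · rw [if_pos h2] at h ⊢
        rw [mul_max_of_nonneg _ _ (show (0:ℝ) ≤ (W.card:ℝ) from Nat.cast_nonneg _)]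
        apply max_le
        · exact keyW (fun i => |α i| * |β i| ^ (tΦ - 1))
            (fun i => mul_nonneg (abs_nonneg _) (Real.rpow_nonneg (abs_nonneg _) _))
            ((le_max_left _ _).trans h.le) _
            (fun w hw => by simp only [← word_mul_rpow, hvA w hw, hvB w hw])
        · exact keyW (fun i => |β i| * |α i| ^ (tΦ - 1))
            (fun i => mul_nonneg (abs_nonneg _) (Real.rpow_nonneg (abs_nonneg _) _))
            ((le_max_right _ _).trans h.le) _
            (fun w hw => by simp only [← word_mul_rpow, hvA w hw, hvB w hw])
      · rw [if_neg h2] at h ⊢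
        exact keyW (fun i => (|α i| * |β i|) ^ (tΦ / 2))
          (fun i => Real.rpow_nonneg (mul_nonneg (abs_nonneg _) (abs_nonneg _)) _)
          h.le _
          (fun w hw => by simp only [← word_mul_all_rpow, hvA w hw, hvB w hw])
  -- lower bound at tΦ for the class weight
  have hlow : (1 : ℝ) / V.card ≤ (W.card : ℝ) * psi ahom bhom tΦ := by
    refine le_trans hv' ?_
    have := Finset.sum_le_card_nsmul W (fun w => ∏ l, φ (w l)) (psi ahom bhom tΦ)
      (fun w hw => by
        have := hφle w
        rwa [hvA w hw, hvB w hw] at this)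
    rwa [nsmul_eq_mul] at this
  -- lower bound at tΦ - δ
  have hshift : (1 : ℝ) ≤ (W.card : ℝ) * psi ahom bhom (tΦ - δ) := by
    have hd := psi_decay hapos hbpos haρ hbρ (show tΦ - δ ≤ tΦ by linarith)
    rw [show tΦ - (tΦ - δ) = δ by ring] at hd
    have hck : ((ρ ^ k : ℝ)) ^ δ = c ^ k := by
      rw [hcdef, ← Real.rpow_natCast ρ k, ← Real.rpow_natCast (ρ ^ δ) k,
        ← Real.rpow_mul hρpos.le, ← Real.rpow_mul hρpos.le, mul_comm]
    rw [hck] at hd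
    have hXY : (W.card : ℝ) * psi ahom bhom tΦ
        ≤ ((W.card : ℝ) * psi ahom bhom (tΦ - δ)) * c ^ k := by
      have h := mul_le_mul_of_nonneg_left hd (Nat.cast_nonneg W.card : (0:ℝ) ≤ W.card)
      rw [← mul_assoc] at h
      exact h
    have h13 : (1 : ℝ) / V.card ≤ ((W.card : ℝ) * psi ahom bhom (tΦ - δ)) * c ^ k :=
      le_trans hlow hXY
    have h14 : (1 : ℝ) ≤ (((W.card : ℝ) * psi ahom bhom (tΦ - δ)) * c ^ k) * V.card :=
      (div_le_iff₀ hVpos).mp h13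
    have hY : (0 : ℝ) ≤ (W.card : ℝ) * psi ahom bhom (tΦ - δ) :=
      mul_nonneg (Nat.cast_nonneg _) (psi_nonneg hapos.le hbpos.le _)
    have hVc : (V.card : ℝ) * c ^ k ≤ 1 := by
      calc (V.card : ℝ) * c ^ k ≤ ((k : ℝ) + 1) ^ m * c ^ k :=
          mul_le_mul_of_nonneg_right hVcard (pow_nonneg hcpos.le k)
        _ ≤ 1 := hK k hk.le
    nlinarith [h14, mul_le_mul_of_nonneg_left hVc hY]
  -- intermediate value theorem
  have hcont : Continuous (fun t => (W.card : ℝ) * psi ahom bhom t) :=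
    continuous_const.mul (psi_continuous hapos hbpos)
  have hIVT := intermediate_value_Icc' (show tΦ - δ ≤ tΦ by linarith) hcont.continuousOn
  have h1mem : (1 : ℝ) ∈ Set.Icc ((W.card : ℝ) * psi ahom bhom tΦ)
      ((W.card : ℝ) * psi ahom bhom (tΦ - δ)) := ⟨hupper, hshift⟩
  obtain ⟨tΨ, htΨmem, htΨeq⟩ := hIVT h1mem
  refine ⟨W, ⟨w₀, hw₀⟩, ?_, tΨ, ?_, ?_⟩
  · intro w₁ h₁ w₂ h₂
    have h := (hmemW w₁ h₁).trans (hmemW w₂ h₂).symm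
    exact ⟨congrArg Prod.fst h, congrArg Prod.snd h⟩
  · rw [hQ tΨ]
    exact htΨeq
  · rcases htΨmem with ⟨hl, hr⟩
    rw [abs_of_nonneg (by linarith)]
    rw [hδdef] at hl
    linarith

end
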